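/- Let d ≥ 1, σ ≥ 0, let n₁,…,n_d ≥ 1 be integers, and let γ > 0 satisfy γ < min_i n_i². Set W_γ = { j ∈ J_d : λ_j ≤ γ }. Let (W_k), indexed by the grid multi-indices k with 1 ≤ k_i ≤ n_i, be mutually independent standard normal N(0,1) random variables, and let ε_k be reals with |ε_k| ≤ ε_max. Then E[ ∑_{j ∈ W_γ} λ_j^σ ( (π^d/∏_{i=1}^d n_i) ∑_k ε_k W_k ξ_j(x_k) )² ] ≤ ε_max² · (2π^{3d/2}/(d · Γ(d/2))) · γ^{σ+d/2} / ∏_{i=1}^d n_i. -/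

import Mathlib

open Real MeasureTheory ProbabilityTheory
open scoped ENNReal NNReal

/-- `λ_j = j_1² + ⋯ + j_d²` for a multi-index `j` of positive integers. -/
def lamMulti {d : ℕ} (j : Fin d → ℕ+) : ℝ := ∑ i, ((j i : ℕ) : ℝ) ^ 2

/-- Dirichlet eigenfunction `ξ_j(x) = (2/π)^{d/2} ∏ᵢ sin(jᵢ xᵢ)` on `(0,π)^d`. -/
noncomputable def xiMulti {d : ℕ} (j : Fin d → ℕ+) (x : Fin d → ℝ) : ℝ :=
  (2 / π) ^ ((d : ℝ) / 2) * ∏ i, Real.sin ((j i : ℕ) * x i)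

/-- Midpoint grid point in one coordinate: `(2k−1)π/(2n)`. -/
noncomputable def gridPt (n k : ℕ) : ℝ := (2 * (k : ℝ) - 1) * π / (2 * n)

lemma integral_gauss01 (f : ℝ → ℝ) :
    ∫ x, f x ∂(gaussianReal 0 1) = ∫ x, gaussianPDFReal 0 1 x * f x := by
  rw [gaussianReal_of_var_ne_zero 0 one_ne_zero]
  have h : gaussianPDF 0 1 = fun x => ((gaussianPDFReal 0 1 x).toNNReal : ℝ≥0∞) := rfl
  rw [h, integral_withDensity_eq_integral_smul
    ((measurable_gaussianPDFReal 0 1).real_toNNReal) f]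
  congr 1; funext x
  simp [NNReal.smul_def, Real.coe_toNNReal _ (gaussianPDFReal_nonneg 0 1 x)]

lemma integrable_gauss01_iff {f : ℝ → ℝ} (hf : Measurable f) :
    Integrable f (gaussianReal 0 1) ↔
      Integrable (fun x => f x * gaussianPDFReal 0 1 x) volume := by
  rw [gaussianReal_of_var_ne_zero 0 one_ne_zero]
  rw [integrable_withDensity_iff (measurable_gaussianPDF 0 1)
    (Filter.Eventually.of_forall fun x => ENNReal.ofReal_lt_top)]
  simp only [gaussianPDF, ENNReal.toReal_ofReal (gaussianPDFReal_nonneg 0 1 _)]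

lemma pdf01_eq (x : ℝ) :
    gaussianPDFReal 0 1 x = (√(2*π))⁻¹ * rexp (-(1/2) * x^2) := by
  simp only [gaussianPDFReal, NNReal.coe_one, mul_one, sub_zero]
  ring_nf

lemma int_id_pdf : Integrable (fun x => x * gaussianPDFReal 0 1 x) volume := by
  simp only [pdf01_eq]
  have := (integrable_mul_exp_neg_mul_sq (b := 1/2) (by norm_num)).const_mul (√(2*π))⁻¹
  exact this.congr (Filter.Eventually.of_forall fun x => by ring)

lemma int_sq_pdf : Integrable (fun x => x^2 * gaussianPDFReal 0 1 x) volume := by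
  simp only [pdf01_eq]
  have h2 := (integrable_rpow_mul_exp_neg_mul_sq (b := 1/2) (by norm_num)
    (s := 2) (by norm_num)).const_mul (√(2*π))⁻¹
  refine h2.congr (Filter.Eventually.of_forall fun x => ?_)
  simp only [Real.rpow_two]
  ring

lemma integral_id_pdf : ∫ x, x * gaussianPDFReal 0 1 x = 0 := by
  have h : ∀ x : ℝ, (-x) * gaussianPDFReal 0 1 (-x) = -(x * gaussianPDFReal 0 1 x) := by
    intro x; simp only [pdf01_eq]; ring
  have h2 := integral_neg_eq_self (fun x => x * gaussianPDFReal 0 1 x) volume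
  simp only [h, integral_neg] at h2
  linarith

lemma integral_sq_pdf : ∫ x, x^2 * gaussianPDFReal 0 1 x = 1 := by
  have key : ∫ x : ℝ in Set.Ioi 0, x ^ (2:ℝ) * rexp (-(1/2) * x ^ (2:ℝ)) =
      ((1/2):ℝ) ^ (-(((2:ℝ) + 1)) / 2) * (1/2) * Real.Gamma (((2:ℝ)+1)/2) :=
    integral_rpow_mul_exp_neg_mul_rpow (by norm_num) (by norm_num) (by norm_num)
  simp only [Real.rpow_two] at key
  have habs : ∫ x : ℝ, x^2 * rexp (-(1/2) * x^2) =
      2 * ∫ x : ℝ in Set.Ioi 0, x^2 * rexp (-(1/2) * x^2) := by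
    rw [← integral_comp_abs (f := fun x => x^2 * rexp (-(1/2) * x^2))]
    congr 1; funext x; rw [sq_abs]
  have hΓ : Real.Gamma (((2:ℝ)+1)/2) = √π / 2 := by
    rw [show ((2:ℝ)+1)/2 = 1/2 + 1 by norm_num, Real.Gamma_add_one (by norm_num),
      Real.Gamma_one_half_eq]; ring
  have hpow : ((1/2):ℝ) ^ (-(((2:ℝ) + 1)) / 2) = 2 * √2 := by
    rw [show (-(((2:ℝ) + 1)) / 2) = -(3/2) by norm_num, one_div,
      Real.inv_rpow (by norm_num), Real.rpow_neg (by norm_num), inv_inv,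
      show ((3:ℝ)/2) = 1 + 1/2 by norm_num, Real.rpow_add (by norm_num),
      Real.rpow_one, ← Real.sqrt_eq_rpow]
  rw [hΓ, hpow] at key
  simp only [pdf01_eq]
  have : ∫ x : ℝ, x ^ 2 * ((√(2*π))⁻¹ * rexp (-(1/2) * x^2)) =
      (√(2*π))⁻¹ * ∫ x : ℝ, x^2 * rexp (-(1/2) * x^2) := by
    rw [← integral_const_mul]; congr 1; funext x; ring
  rw [this, habs, key]
  have h2π : √(2*π) = √2 * √π := Real.sqrt_mul (by norm_num) _
  rw [h2π]
  have hs2 : (0:ℝ) < √2 := Real.sqrt_pos.mpr (by norm_num)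
  have hsπ : (0:ℝ) < √π := Real.sqrt_pos.mpr Real.pi_pos
  field_simp

section RV
variable {Ω : Type*} [MeasureSpace Ω] [IsProbabilityMeasure (ℙ : Measure Ω)]

lemma W_integrable {X : Ω → ℝ} (hX : Measurable X)
    (hmap : Measure.map X ℙ = gaussianReal 0 1) : Integrable X ℙ := by
  have h : Integrable id (Measure.map X ℙ) := by
    rw [hmap, integrable_gauss01_iff measurable_id]
    exact int_id_pdf.congr (Filter.Eventually.of_forall fun x => by simp)
  rwa [integrable_map_measure aestronglyMeasurable_id hX.aemeasurable] at h

lemma W_sq_integrable {X : Ω → ℝ} (hX : Measurable X)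
    (hmap : Measure.map X ℙ = gaussianReal 0 1) :
    Integrable (fun ω => X ω ^ 2) ℙ := by
  have h : Integrable (fun x : ℝ => x ^ 2) (Measure.map X ℙ) := by
    rw [hmap, integrable_gauss01_iff (by fun_prop)]
    exact int_sq_pdf.congr (Filter.Eventually.of_forall fun x => by simp)
  rwa [integrable_map_measure (by fun_prop) hX.aemeasurable] at h

lemma W_integral {X : Ω → ℝ} (hX : Measurable X)
    (hmap : Measure.map X ℙ = gaussianReal 0 1) : ∫ ω, X ω ∂ℙ = 0 := by
  have h := integral_map (μ := (ℙ : Measure Ω)) (φ := X) hX.aemeasurable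
    (f := fun x : ℝ => x) aestronglyMeasurable_id
  rw [hmap, integral_gauss01] at h
  rw [← h]
  calc ∫ x, gaussianPDFReal 0 1 x * x = ∫ x, x * gaussianPDFReal 0 1 x := by
        congr 1; funext x; ring
    _ = 0 := integral_id_pdf

lemma W_sq_integral {X : Ω → ℝ} (hX : Measurable X)
    (hmap : Measure.map X ℙ = gaussianReal 0 1) : ∫ ω, X ω ^ 2 ∂ℙ = 1 := by
  have h := integral_map (μ := (ℙ : Measure Ω)) (φ := X) hX.aemeasurable
    (f := fun x : ℝ => x ^ 2) (by fun_prop)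
  rw [hmap, integral_gauss01] at h
  rw [← h, ← integral_sq_pdf]
  congr 1; funext x; ring

lemma key_variance {κ : Type*} [Fintype κ] (W : κ → Ω → ℝ)
    (hWmeas : ∀ k, Measurable (W k))
    (hWindep : iIndepFun W ℙ)
    (hWgauss : ∀ k, Measure.map (W k) ℙ = gaussianReal 0 1) (c : κ → ℝ) :
    Integrable (fun ω => (∑ k, c k * W k ω) ^ 2) ℙ ∧
      ∫ ω, (∑ k, c k * W k ω) ^ 2 ∂ℙ = ∑ k, c k ^ 2 := by
  classical
  have hint : ∀ k l : κ, Integrable (fun ω => W k ω * W l ω) ℙ := by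
    intro k l
    by_cases hkl : k = l
    · subst hkl
      exact (W_sq_integrable (hWmeas k) (hWgauss k)).congr
        (Filter.Eventually.of_forall fun ω => by ring)
    · refine Integrable.mono'
        (((W_sq_integrable (hWmeas k) (hWgauss k)).add
          (W_sq_integrable (hWmeas l) (hWgauss l))).div_const 2)
        ((hWmeas k).mul (hWmeas l)).aestronglyMeasurable
        (Filter.Eventually.of_forall fun ω => ?_)
      simp only [Pi.add_apply]
      rw [Real.norm_eq_abs, abs_mul]
      nlinarith [sq_nonneg (|W k ω| - |W l ω|), abs_nonneg (W k ω), abs_nonneg (W l ω),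
        sq_abs (W k ω), sq_abs (W l ω)]
  have hval : ∀ k l : κ, ∫ ω, W k ω * W l ω ∂ℙ = if k = l then 1 else 0 := by
    intro k l
    by_cases hkl : k = l
    · subst hkl; simp only [if_pos rfl]
      rw [← W_sq_integral (hWmeas k) (hWgauss k)]
      congr 1; funext ω; ring
    · rw [if_neg hkl]
      have hi : IndepFun (W k) (W l) ℙ := hWindep.indepFun hkl
      have h2 := IndepFun.integral_fun_mul_eq_mul_integral hi (W_integrable (hWmeas k) (hWgauss k)).aestronglyMeasurable
        (W_integrable (hWmeas l) (hWgauss l)).aestronglyMeasurable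
      rw [W_integral (hWmeas k) (hWgauss k), zero_mul] at h2
      exact h2
  have hexp : ∀ ω, (∑ k, c k * W k ω) ^ 2 =
      ∑ k, ∑ l, (c k * c l) * (W k ω * W l ω) := by
    intro ω
    rw [sq, Finset.sum_mul_sum]
    refine Finset.sum_congr rfl fun k _ => Finset.sum_congr rfl fun l _ => by ring
  have hI : Integrable (fun ω => ∑ k : κ, ∑ l : κ, (c k * c l) * (W k ω * W l ω)) ℙ :=
    integrable_finset_sum _ fun k _ => integrable_finset_sum _ fun l _ =>
      (hint k l).const_mul (c k * c l)
  constructor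
  · exact hI.congr (Filter.Eventually.of_forall fun ω => (hexp ω).symm)
  · calc ∫ ω, (∑ k, c k * W k ω) ^ 2 ∂ℙ
        = ∫ ω, ∑ k, ∑ l, (c k * c l) * (W k ω * W l ω) ∂ℙ := by
          congr 1; funext ω; exact hexp ω
      _ = ∑ k, ∑ l, (c k * c l) * ∫ ω, W k ω * W l ω ∂ℙ := by
          rw [integral_finset_sum _ fun k (_ : k ∈ Finset.univ) =>
            integrable_finset_sum (f := fun l ω => (c k * c l) * (W k ω * W l ω))
              Finset.univ fun l _ => (hint k l).const_mul (c k * c l)]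
          exact Finset.sum_congr rfl fun k _ => by
            rw [integral_finset_sum (f := fun l ω => (c k * c l) * (W k ω * W l ω))
              Finset.univ fun l _ => (hint k l).const_mul (c k * c l)]
            exact Finset.sum_congr rfl fun l _ => integral_const_mul _ _
      _ = ∑ k, c k ^ 2 := by
          refine Finset.sum_congr rfl fun k _ => ?_
          rw [Finset.sum_eq_single k]
          · rw [hval k k, if_pos rfl]; ring
          · intro l _ hlk; rw [hval k l, if_neg (Ne.symm hlk), mul_zero]
          · intro h; exact absurd (Finset.mem_univ k) h

end RV

/-- The interval attached to a positive integer `m` and a sign `b`. -/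
def sgnIoo (m : ℕ+) (b : Bool) : Set ℝ :=
  Set.Ioo (cond b ((m:ℝ) - 1) (-(m:ℝ))) (cond b (m:ℝ) (1 - (m:ℝ)))

lemma sgnIoo_disj {m m' : ℕ+} {b b' : Bool} {x : ℝ}
    (h : x ∈ sgnIoo m b) (h' : x ∈ sgnIoo m' b') : m = m' ∧ b = b' := by
  have hm1 : (1:ℝ) ≤ (m:ℝ) := by exact_mod_cast m.one_le
  have hm1' : (1:ℝ) ≤ (m':ℝ) := by exact_mod_cast m'.one_le
  obtain ⟨ha, hb⟩ := h
  obtain ⟨ha', hb'⟩ := h'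
  cases b <;> cases b' <;> simp only [Bool.cond_true, Bool.cond_false] at ha hb ha' hb'
  · refine ⟨?_, rfl⟩
    by_contra hne
    rcases lt_or_gt_of_ne (fun hc => hne (by exact_mod_cast hc) :
      ((m:ℕ):ℝ) ≠ ((m':ℕ):ℝ)) with hlt | hgt
    · have : (m:ℝ) + 1 ≤ (m':ℝ) := by exact_mod_cast Nat.succ_le_of_lt (by exact_mod_cast hlt)
      linarith
    · have : (m':ℝ) + 1 ≤ (m:ℝ) := by exact_mod_cast Nat.succ_le_of_lt (by exact_mod_cast hgt)
      linarith
  · exfalso; linarith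
  · exfalso; linarith
  · refine ⟨?_, rfl⟩
    by_contra hne
    rcases lt_or_gt_of_ne (fun hc => hne (by exact_mod_cast hc) :
      ((m:ℕ):ℝ) ≠ ((m':ℕ):ℝ)) with hlt | hgt
    · have : (m:ℝ) + 1 ≤ (m':ℝ) := by exact_mod_cast Nat.succ_le_of_lt (by exact_mod_cast hlt)
      linarith
    · have : (m':ℝ) + 1 ≤ (m:ℝ) := by exact_mod_cast Nat.succ_le_of_lt (by exact_mod_cast hgt)
      linarith

lemma sgnIoo_abs_le {m : ℕ+} {b : Bool} {x : ℝ} (h : x ∈ sgnIoo m b) : |x| ≤ (m:ℝ) := by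
  have hm1 : (1:ℝ) ≤ (m:ℝ) := by exact_mod_cast m.one_le
  obtain ⟨ha, hb⟩ := h
  cases b <;> simp only [Bool.cond_true, Bool.cond_false] at ha hb <;>
    rw [abs_le] <;> constructor <;> linarith

lemma volume_sgnIoo (m : ℕ+) (b : Bool) : volume (sgnIoo m b) = 1 := by
  rw [sgnIoo]
  cases b <;> simp only [Bool.cond_true, Bool.cond_false, Real.volume_Ioo] <;>
    rw [show (1:ℝ≥0∞) = ENNReal.ofReal 1 by simp] <;> congr 1 <;> ring

lemma count_le (d : ℕ) (hd : 1 ≤ d) (γ : ℝ) (hγ0 : 0 < γ) (S : Finset (Fin d → ℕ+))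
    (hS : ∀ j ∈ S, lamMulti j ≤ γ) :
    (S.card : ℝ) * 2 ^ d ≤ √γ ^ d * (√π ^ d / Real.Gamma (d / 2 + 1)) := by
  classical
  haveI : Nonempty (Fin d) := ⟨⟨0, hd⟩⟩
  set C : (Fin d → ℕ+) × (Fin d → Bool) → Set (Fin d → ℝ) :=
    fun p => Set.univ.pi fun i => sgnIoo (p.1 i) (p.2 i) with hC
  set T : Finset ((Fin d → ℕ+) × (Fin d → Bool)) := S ×ˢ Finset.univ with hT
  have hmeas : ∀ p ∈ T, MeasurableSet (C p) := fun p _ =>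
    MeasurableSet.univ_pi fun i => measurableSet_Ioo
  have hdisj : (T : Set ((Fin d → ℕ+) × (Fin d → Bool))).PairwiseDisjoint C := by
    intro p _ q _ hpq
    refine Set.disjoint_left.mpr fun x hxp hxq => hpq ?_
    have h : ∀ i, p.1 i = q.1 i ∧ p.2 i = q.2 i := fun i =>
      sgnIoo_disj (hxp i (Set.mem_univ i)) (hxq i (Set.mem_univ i))
    exact Prod.ext (funext fun i => (h i).1) (funext fun i => (h i).2)
  have hvol : ∀ p ∈ T, volume (C p) = 1 := fun p _ => by
    rw [hC, volume_pi_pi]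
    simp [volume_sgnIoo]
  have hunion : (⋃ p ∈ T, C p) ⊆
      {x : Fin d → ℝ | (∑ i, |x i| ^ (2:ℝ)) ^ ((1:ℝ)/2) ≤ √γ} := by
    rintro x hx
    simp only [Set.mem_iUnion] at hx
    obtain ⟨p, hpT, hxp⟩ := hx
    have hpS : p.1 ∈ S := (Finset.mem_product.mp hpT).1
    have habs : ∀ i, |x i| ≤ ((p.1 i : ℕ) : ℝ) := fun i =>
      sgnIoo_abs_le (hxp i (Set.mem_univ i))
    have hsum : (∑ i, |x i| ^ (2:ℝ)) ≤ γ := by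
      refine le_trans ?_ (hS p.1 hpS)
      rw [lamMulti]
      refine Finset.sum_le_sum fun i _ => ?_
      rw [Real.rpow_two]
      exact pow_le_pow_left₀ (abs_nonneg _) (habs i) 2
    have h0 : (0:ℝ) ≤ ∑ i, |x i| ^ (2:ℝ) :=
      Finset.sum_nonneg fun i _ => Real.rpow_nonneg (abs_nonneg _) _
    rw [Set.mem_setOf_eq, Real.sqrt_eq_rpow]
    exact Real.rpow_le_rpow h0 hsum (by norm_num)
  have hcard : (volume (⋃ p ∈ T, C p)) = (T.card : ℝ≥0∞) := by
    rw [measure_biUnion_finset hdisj hmeas, Finset.sum_congr rfl hvol]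
    simp
  have hTcard : T.card = S.card * 2 ^ d := by
    rw [hT, Finset.card_product, Finset.card_univ]
    simp [Fintype.card_fun]
  have hvolB := MeasureTheory.volume_sum_rpow_le (ι := Fin d) (p := 2) one_le_two (√γ)
  simp only [Fintype.card_fin] at hvolB
  have hle : (volume (⋃ p ∈ T, C p)) ≤
      volume {x : Fin d → ℝ | (∑ i, |x i| ^ (2:ℝ)) ^ ((1:ℝ)/2) ≤ √γ} :=
    measure_mono hunion
  rw [hcard, hTcard, hvolB] at hle
  have hΓhalf : 2 * Real.Gamma (1/2 + 1) = √π := by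
    rw [Real.Gamma_add_one (by norm_num), Real.Gamma_one_half_eq]; ring
  have hrhs : (ENNReal.ofReal (√γ)) ^ d *
      ENNReal.ofReal ((2 * Real.Gamma (1/(2:ℝ) + 1)) ^ d / Real.Gamma (d / (2:ℝ) + 1)) =
      ENNReal.ofReal (√γ ^ d * (√π ^ d / Real.Gamma (d / 2 + 1))) := by
    rw [← ENNReal.ofReal_pow (Real.sqrt_nonneg _), ← ENNReal.ofReal_mul (by positivity),
      hΓhalf]
  rw [hrhs] at hle
  have h2 := (ENNReal.le_ofReal_iff_toReal_le (ENNReal.natCast_ne_top _) (by positivity)).mp hle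
  simp only [ENNReal.toReal_natCast] at h2
  push_cast at h2
  linarith

set_option maxHeartbeats 1000000 in
theorem stmt_18 (d : ℕ) (hd : 1 ≤ d) (σ : ℝ) (hσ : 0 ≤ σ)
    (n : Fin d → ℕ) (hn : ∀ i, 1 ≤ n i)
    (γ : ℝ) (hγ0 : 0 < γ) (hγ : ∀ i, γ < ((n i : ℝ)) ^ 2)
    {Ω : Type*} [MeasureSpace Ω] [IsProbabilityMeasure (ℙ : Measure Ω)]
    (W : ((i : Fin d) → Fin (n i)) → Ω → ℝ)
    (hWmeas : ∀ k, Measurable (W k))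
    (hWindep : iIndepFun W ℙ)
    (hWgauss : ∀ k, Measure.map (W k) ℙ = gaussianReal 0 1)
    (ε : ((i : Fin d) → Fin (n i)) → ℝ) (εmax : ℝ) (hε : ∀ k, |ε k| ≤ εmax) :
    ∫ ω, (∑' j : Fin d → ℕ+,
        if lamMulti j ≤ γ then
          lamMulti j ^ σ *
            ((π ^ d / ∏ i, (n i : ℝ)) * ∑ k : (i : Fin d) → Fin (n i),
              ε k * W k ω * xiMulti j (fun i => gridPt (n i) ((k i).val + 1))) ^ 2
        else 0) ∂(ℙ : Measure Ω)
      ≤ εmax ^ 2 * (2 * π ^ ((3 * (d : ℝ)) / 2) / (d * Real.Gamma ((d : ℝ) / 2))) *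
          γ ^ (σ + (d : ℝ) / 2) / ∏ i, (n i : ℝ) := by
  classical
  have hπ : (0:ℝ) < π := Real.pi_pos
  haveI : Nonempty ((i : Fin d) → Fin (n i)) := ⟨fun i => ⟨0, hn i⟩⟩
  obtain ⟨k₀⟩ := (inferInstance : Nonempty ((i : Fin d) → Fin (n i)))
  have hεmax : 0 ≤ εmax := le_trans (abs_nonneg _) (hε k₀)
  set P : ℝ := ∏ i, (n i : ℝ) with hP
  have hP0 : 0 < P := Finset.prod_pos fun i _ => by exact_mod_cast hn i
  set ξ : (Fin d → ℕ+) → ((i : Fin d) → Fin (n i)) → ℝ :=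
    fun j k => xiMulti j (fun i => gridPt (n i) ((k i).val + 1)) with hξ
  set c : (Fin d → ℕ+) → ((i : Fin d) → Fin (n i)) → ℝ :=
    fun j k => ε k * ξ j k with hc
  have h2π : (0:ℝ) < 2/π := by positivity
  -- coefficient bound
  have hc_sq : ∀ j k, (c j k)^2 ≤ εmax^2 * (2/π)^(d:ℝ) := by
    intro j k
    have hxi2 : (ξ j k)^2 ≤ (2/π)^(d:ℝ) := by
      rw [hξ]
      simp only
      rw [xiMulti, mul_pow]
      have h1 : ((2/π:ℝ) ^ ((d:ℝ)/2))^2 = (2/π)^(d:ℝ) := by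
        rw [← Real.rpow_natCast ((2/π:ℝ) ^ ((d:ℝ)/2)) 2, ← Real.rpow_mul h2π.le]
        norm_num
      rw [h1]
      have h2 : (∏ i, Real.sin ((j i : ℕ) * gridPt (n i) ((k i).val + 1)))^2 ≤ 1 := by
        rw [← Finset.prod_pow]
        exact Finset.prod_le_one (fun i _ => sq_nonneg _) (fun i _ => Real.sin_sq_le_one _)
      nlinarith [Real.rpow_nonneg h2π.le (d:ℝ),
        sq_nonneg (∏ i, Real.sin ((j i : ℕ) * gridPt (n i) ((k i).val + 1)))]
    have hε2 : (ε k)^2 ≤ εmax^2 := by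
      have := abs_le.mp (hε k)
      nlinarith
    have h0 : (0:ℝ) ≤ (ξ j k)^2 := sq_nonneg _
    calc (c j k)^2 = (ε k)^2 * (ξ j k)^2 := by rw [hc]; ring
      _ ≤ εmax^2 * (2/π)^(d:ℝ) := by nlinarith
  -- the support finset
  set N : ℕ+ := ⟨max 1 ⌈γ⌉₊, lt_of_lt_of_le one_pos (le_max_left _ _)⟩ with hN
  set S₀ : Finset (Fin d → ℕ+) := Fintype.piFinset fun _ => Finset.Icc 1 N with hS₀
  have hγN : γ ≤ ((N:ℕ):ℝ) := by
    refine le_trans (Nat.le_ceil γ) ?_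
    exact_mod_cast le_max_right 1 ⌈γ⌉₊
  have hsupp : ∀ j ∉ S₀, ¬ (lamMulti j ≤ γ) := by
    intro j hj hle
    rw [hS₀, Fintype.mem_piFinset] at hj
    push_neg at hj
    obtain ⟨i, hi⟩ := hj
    rw [Finset.mem_Icc] at hi
    push_neg at hi
    have hNi : N < j i := hi (j i).one_le
    have h1 : ((N:ℕ):ℝ) < ((j i : ℕ):ℝ) := by exact_mod_cast hNi
    have hj1 : (1:ℝ) ≤ ((j i : ℕ):ℝ) := by exact_mod_cast (j i).one_le
    have h2 : ((j i:ℕ):ℝ) ≤ ((j i:ℕ):ℝ)^2 := by nlinarith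
    have h3 : ((j i:ℕ):ℝ)^2 ≤ lamMulti j := by
      rw [lamMulti]
      exact Finset.single_le_sum (f := fun i => ((j i : ℕ):ℝ)^2)
        (fun i _ => sq_nonneg _) (Finset.mem_univ i)
    linarith
  -- key variance facts
  have hkey := fun j => key_variance W hWmeas hWindep hWgauss (c j)
  -- the per-j integrand
  set F : (Fin d → ℕ+) → Ω → ℝ := fun j ω =>
    if lamMulti j ≤ γ then
      lamMulti j ^ σ * ((π ^ d / P) * ∑ k, c j k * W k ω) ^ 2
    else 0 with hF
  have hFeq : ∀ j ω, (if lamMulti j ≤ γ then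
      lamMulti j ^ σ * ((π ^ d / P) * ∑ k, ε k * W k ω * ξ j k) ^ 2 else 0) = F j ω := by
    intro j ω
    rw [hF]
    by_cases h : lamMulti j ≤ γ
    · simp only [if_pos h]
      have hs : (∑ k, ε k * W k ω * ξ j k) = ∑ k, c j k * W k ω :=
        Finset.sum_congr rfl fun k _ => by rw [hc]; ring
      rw [hs]
    · simp only [if_neg h]
  have hFint : ∀ j, Integrable (F j) ℙ := by
    intro j
    by_cases h : lamMulti j ≤ γ
    · have : F j = fun ω => (lamMulti j ^ σ * (π ^ d / P)^2) * (∑ k, c j k * W k ω)^2 := by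
        funext ω; rw [hF]; simp only [if_pos h]; ring
      rw [this]
      exact (hkey j).1.const_mul _
    · have : F j = fun _ => (0:ℝ) := by funext ω; rw [hF]; simp only [if_neg h]
      rw [this]
      exact integrable_const 0
  -- bound constant
  set B : ℝ := γ ^ σ * (π ^ d / P)^2 * (P * (εmax^2 * (2/π)^(d:ℝ))) with hB
  have hB0 : 0 ≤ B := by
    rw [hB]
    have := Real.rpow_nonneg hγ0.le σ
    have := Real.rpow_nonneg h2π.le (d:ℝ)
    positivity
  have hcardκ : (Fintype.card ((i : Fin d) → Fin (n i)) : ℝ) = P := by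
    rw [Fintype.card_pi, hP]
    push_cast
    simp
  have hFbound : ∀ j, ∫ ω, F j ω ∂ℙ ≤ if lamMulti j ≤ γ then B else 0 := by
    intro j
    by_cases h : lamMulti j ≤ γ
    · rw [if_pos h]
      have heq : F j = fun ω => (lamMulti j ^ σ * (π ^ d / P)^2) * (∑ k, c j k * W k ω)^2 := by
        funext ω; rw [hF]; simp only [if_pos h]; ring
      rw [heq, integral_const_mul, (hkey j).2]
      have hlam0 : 0 ≤ lamMulti j := Finset.sum_nonneg fun i _ => sq_nonneg _
      have hlamsig : lamMulti j ^ σ ≤ γ ^ σ := Real.rpow_le_rpow hlam0 h hσ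
      have hsum : ∑ k, (c j k)^2 ≤ P * (εmax^2 * (2/π)^(d:ℝ)) := by
        calc ∑ k, (c j k)^2
            ≤ ∑ _k : (i : Fin d) → Fin (n i), εmax^2 * (2/π)^(d:ℝ) :=
              Finset.sum_le_sum fun k _ => hc_sq j k
          _ = (Fintype.card ((i : Fin d) → Fin (n i)) : ℝ) * (εmax^2 * (2/π)^(d:ℝ)) := by
              rw [Finset.sum_const, Finset.card_univ, nsmul_eq_mul]
          _ = P * (εmax^2 * (2/π)^(d:ℝ)) := by rw [hcardκ]
      have hsum0 : 0 ≤ ∑ k, (c j k)^2 := Finset.sum_nonneg fun k _ => sq_nonneg _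
      have hlamsig0 : 0 ≤ lamMulti j ^ σ := Real.rpow_nonneg hlam0 σ
      have hA0 : 0 ≤ (π ^ d / P)^2 := sq_nonneg _
      rw [hB]
      have h1 : lamMulti j ^ σ * (π ^ d / P)^2 * (∑ k, (c j k)^2)
          ≤ γ ^ σ * (π ^ d / P)^2 * (P * (εmax^2 * (2/π)^(d:ℝ))) := by
        have hγσ0 : 0 ≤ γ ^ σ := Real.rpow_nonneg hγ0.le σ
        apply mul_le_mul (mul_le_mul hlamsig le_rfl hA0 hγσ0) hsum hsum0
        positivity
      linarith
    · rw [if_neg h]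
      have : F j = fun _ => (0:ℝ) := by funext ω; rw [hF]; simp only [if_neg h]
      rw [this]
      simp
  -- main chain
  have step1 : (fun ω => (∑' j : Fin d → ℕ+,
      if lamMulti j ≤ γ then
        lamMulti j ^ σ * ((π ^ d / P) * ∑ k, ε k * W k ω * ξ j k) ^ 2
      else 0)) = fun ω => ∑ j ∈ S₀, F j ω := by
    funext ω
    rw [tsum_congr (fun j => hFeq j ω)]
    exact tsum_eq_sum fun j hj => by
      rw [hF]; exact if_neg (hsupp j hj)
  rw [step1, integral_finset_sum S₀ fun j _ => hFint j]
  set Sf : Finset (Fin d → ℕ+) := S₀.filter (fun j => lamMulti j ≤ γ) with hSf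
  have hcount : (Sf.card : ℝ) * 2 ^ d ≤ √γ ^ d * (√π ^ d / Real.Gamma (d / 2 + 1)) :=
    count_le d hd γ hγ0 Sf fun j hj => (Finset.mem_filter.mp hj).2
  have step2 : ∑ j ∈ S₀, ∫ ω, F j ω ∂ℙ ≤ (Sf.card : ℝ) * B := by
    calc ∑ j ∈ S₀, ∫ ω, F j ω ∂ℙ
        ≤ ∑ j ∈ S₀, (if lamMulti j ≤ γ then B else 0) :=
          Finset.sum_le_sum fun j _ => hFbound j
      _ = ∑ j ∈ Sf, B := (Finset.sum_filter _ _).symm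
      _ = (Sf.card : ℝ) * B := by rw [Finset.sum_const, nsmul_eq_mul]
  refine le_trans step2 ?_
  -- final arithmetic
  have hΓh : (0:ℝ) < Real.Gamma ((d:ℝ)/2) := Real.Gamma_pos_of_pos (by positivity)
  have hd0 : (0:ℝ) < (d:ℝ) := by exact_mod_cast hd
  have hΓp : Real.Gamma ((d:ℝ) / 2 + 1) = ((d:ℝ)/2) * Real.Gamma ((d:ℝ)/2) :=
    Real.Gamma_add_one (by positivity)
  have hsγ : √γ ^ d = γ ^ ((d:ℝ)/2) := by
    rw [Real.sqrt_eq_rpow, ← Real.rpow_natCast (γ ^ ((1:ℝ)/2)) d, ← Real.rpow_mul hγ0.le]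
    congr 1; ring
  have hsπ : √π ^ d = π ^ ((d:ℝ)/2) := by
    rw [Real.sqrt_eq_rpow, ← Real.rpow_natCast (π ^ ((1:ℝ)/2)) d, ← Real.rpow_mul hπ.le]
    congr 1; ring
  have hπd : (π:ℝ) ^ d = π ^ (d:ℝ) := (Real.rpow_natCast π d).symm
  have h2d : ((2:ℝ)/π) ^ (d:ℝ) = 2 ^ d / π ^ (d:ℝ) := by
    rw [Real.div_rpow (by norm_num) hπ.le, Real.rpow_natCast]
  have hπ3 : π ^ ((3 * (d:ℝ)) / 2) = π ^ (d:ℝ) * π ^ ((d:ℝ)/2) := by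
    rw [← Real.rpow_add hπ]
    congr 1; ring
  have hγadd : γ ^ (σ + (d:ℝ)/2) = γ ^ σ * γ ^ ((d:ℝ)/2) := Real.rpow_add hγ0 _ _
  have hcount' : (Sf.card : ℝ) ≤ γ ^ ((d:ℝ)/2) * (π ^ ((d:ℝ)/2) / Real.Gamma ((d:ℝ)/2 + 1)) / 2 ^ d := by
    rw [← hsγ, ← hsπ]
    rw [le_div_iff₀ (by positivity)]
    exact_mod_cast hcount
  have hπd0 : (0:ℝ) < π ^ (d:ℝ) := Real.rpow_pos_of_pos hπ _
  have hπd20 : (0:ℝ) < π ^ ((d:ℝ)/2) := Real.rpow_pos_of_pos hπ _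
  have hγd20 : (0:ℝ) < γ ^ ((d:ℝ)/2) := Real.rpow_pos_of_pos hγ0 _
  have hγσ0 : (0:ℝ) < γ ^ σ := Real.rpow_pos_of_pos hγ0 _
  calc (Sf.card : ℝ) * B
      ≤ (γ ^ ((d:ℝ)/2) * (π ^ ((d:ℝ)/2) / Real.Gamma ((d:ℝ)/2 + 1)) / 2 ^ d) * B :=
        mul_le_mul_of_nonneg_right hcount' hB0
    _ = εmax ^ 2 * (2 * π ^ ((3 * (d:ℝ)) / 2) / ((d:ℝ) * Real.Gamma ((d:ℝ) / 2))) *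
          γ ^ (σ + (d:ℝ) / 2) / P := by
        rw [hB, hΓp, hπ3, hγadd, hπd, h2d]
        have h2dd : (0:ℝ) < (2:ℝ)^d := by positivity
        field_simp
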